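/- Let σ satisfy edge-directionality on an EW-QBAF, and let r be an edge independent of the topic argument α (there is no path from the target of r to α, and r is not incident into α). Then the G-RAE of r with respect to α is zero: ∇_{r→α}^σ = 0 (irrelevance). -/
import Mathlib


open Set

structure QBAF (A : Type*) [DecidableEq A] where
  att : Finset (A × A)
  sup : Finset (A × A)
  disj : Disjoint att sup
  tau : A → ℝ
  w : A × A → ℝ

namespace QBAF

variable {A : Type*} [DecidableEq A]

/-- The set of all edges (attacks and supports). -/
def edges (Q : QBAF A) : Finset (A × A) := Q.att ∪ Q.sup

/-- Multiset of edge-weighted attacker strengths of `α`. -/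
def attMS (Q : QBAF A) (σ : A → ℝ) (α : A) : Multiset ℝ :=
  (Q.att.filter (fun r => r.2 = α)).val.map (fun r => σ r.1 * Q.w r)

/-- Multiset of edge-weighted supporter strengths of `α`. -/
def supMS (Q : QBAF A) (σ : A → ℝ) (α : A) : Multiset ℝ :=
  (Q.sup.filter (fun r => r.2 = α)).val.map (fun r => σ r.1 * Q.w r)

/-- Iterates of the modular-semantics update procedure:
`σ⁰ = τ`, `σ^(i+1)(α) = infl (τ α) (agg A^σ_α S^σ_α)`. -/
def iter (agg : Multiset ℝ → Multiset ℝ → ℝ) (infl : ℝ → ℝ → ℝ)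
    (Q : QBAF A) : ℕ → A → ℝ
  | 0 => Q.tau
  | i + 1 => fun α =>
      infl (Q.tau α)
        (agg (Q.attMS (iter agg infl Q i) α) (Q.supMS (iter agg infl Q i) α))

/-- Replace the edge weight function. -/
def setW (Q : QBAF A) (w' : A × A → ℝ) : QBAF A := { Q with w := w' }

/-- Replace the base score function. -/
def setTau (Q : QBAF A) (τ' : A → ℝ) : QBAF A := { Q with tau := τ' }

/-- For acyclic EW-QBAFs the iteration stabilizes after `card A` steps, so this is
the strength obtained by a forward pass in topological order. -/
def strength [Fintype A] (agg : Multiset ℝ → Multiset ℝ → ℝ) (infl : ℝ → ℝ → ℝ)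
    (Q : QBAF A) : A → ℝ := iter agg infl Q (Fintype.card A)

end QBAF

/-- `Core` of a multiset of reals: the sub-multiset of nonzero elements. -/
noncomputable def mcore (S : Multiset ℝ) : Multiset ℝ := S.filter (fun x => x ≠ 0)

/-- There is a (nonempty) directed path from `a` to `b` using edges of `R`. -/
def HasPath {A : Type*} (R : Finset (A × A)) (a b : A) : Prop :=
  Relation.TransGen (fun x y => (x, y) ∈ R) a b

/-- `p` is a directed path from `a` to `b`: a nonempty list of consecutive edges of `R`. -/
def IsPath {A : Type*} (R : Finset (A × A)) (a b : A) (p : List (A × A)) : Prop :=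
  p ≠ [] ∧ (∀ e ∈ p, e ∈ R) ∧ List.Chain' (fun e f => e.2 = f.1) p ∧
    p.head?.map Prod.fst = some a ∧ p.getLast?.map Prod.snd = some b

/-- The EW-QBAF is acyclic. -/
def QAcyclic {A : Type*} [DecidableEq A] (Q : QBAF A) : Prop :=
  ∀ α, ¬ HasPath Q.edges α α

/-- A gradual semantics assigning strengths to arguments of any EW-QBAF. -/
abbrev Sem (A : Type*) [DecidableEq A] := QBAF A → A → ℝ

/-- `S` dominates `T`: either both cores are empty, or there is a sub-multiset of
`Core S` in bijection `f` with `Core T` such that `x ≤ f x` (the bijection encoded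
as a multiset of pairs). -/
def MDominates (S T : Multiset ℝ) : Prop :=
  (mcore S = 0 ∧ mcore T = 0) ∨
    ∃ P : Multiset (ℝ × ℝ), P.map Prod.fst = mcore T ∧ P.map Prod.snd ≤ mcore S ∧
      ∀ q ∈ P, q.1 ≤ q.2

/-- Monotonicity of an aggregation function. -/
def AggMonotone (agg : Multiset ℝ → Multiset ℝ → ℝ) : Prop :=
  (∀ A S, MDominates A S → agg A S ≤ 0) ∧
  (∀ A S, MDominates S A → 0 ≤ agg A S) ∧
  (∀ A A' S, MDominates A A' → agg A S ≤ agg A' S) ∧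
  (∀ A S S', MDominates S S' → agg A S' ≤ agg A S)

/-- Monotonicity of an influence function. -/
def InflMonotone (infl : ℝ → ℝ → ℝ) : Prop :=
  (∀ b a, a < 0 → infl b a ≤ b) ∧
  (∀ b a, 0 < a → b ≤ infl b a) ∧
  (∀ a b₁ b₂, b₁ ≤ b₂ → infl b₁ a ≤ infl b₂ a) ∧
  (∀ b a₁ a₂, a₁ ≤ a₂ → infl b a₁ ≤ infl b a₂)

/-- Edge-monotonicity of a semantics: increasing the weight of a single attack
(support) edge does not increase (decrease) the strength of its target. -/
def EdgeMono {A : Type*} [DecidableEq A] (σ : Sem A) : Prop :=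
  ∀ (Q : QBAF A) (r : A × A) (w' : A × A → ℝ),
    r ∈ Q.edges → Q.w r ≤ w' r → (∀ t, t ≠ r → w' t = Q.w t) →
    (r ∈ Q.att → σ (Q.setW w') r.2 ≤ σ Q r.2) ∧
    (r ∈ Q.sup → σ Q r.2 ≤ σ (Q.setW w') r.2)

/-- (Base-score) monotonicity of a semantics: if `(β,α)` is an edge and the unique
path from `β` to `α`, then increasing `τ(β)` changes `σ(α)` sign-correctly. -/
def BaseMono {A : Type*} [DecidableEq A] (σ : Sem A) : Prop :=
  ∀ (Q : QBAF A) (β α : A) (τ' : A → ℝ),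
    β ≠ α → (β, α) ∈ Q.edges → (∃! p, IsPath Q.edges β α p) →
    Q.tau β ≤ τ' β → (∀ γ, γ ≠ β → τ' γ = Q.tau γ) →
    ((β, α) ∈ Q.att → σ (Q.setTau τ') α ≤ σ Q α) ∧
    ((β, α) ∈ Q.sup → σ Q α ≤ σ (Q.setTau τ') α)

/-- Edge-neutrality of a semantics: adding a fresh edge of weight `0` leaves the
strength of its target unchanged. -/
def EdgeNeutralSem {A : Type*} [DecidableEq A] (σ : Sem A) : Prop :=
  ∀ (Q Q' : QBAF A) (β α : A),
    Q'.tau = Q.tau → Q.att ⊆ Q'.att → Q.sup ⊆ Q'.sup →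
    Q'.edges = insert (β, α) Q.edges →
    (∀ r ∈ Q.edges, Q'.w r = Q.w r) → Q'.w (β, α) = 0 →
    σ Q' α = σ Q α

/-- Edge-stability of a semantics: if all incoming edges of `α` have weight `0`,
the strength of `α` is its base score. -/
def EdgeStable {A : Type*} [DecidableEq A] (σ : Sem A) : Prop :=
  ∀ (Q : QBAF A) (α : A), (∀ r ∈ Q.edges, r.2 = α → Q.w r = 0) → σ Q α = Q.tau α

/-- `s` is attainable for `α` by varying edge weights in `[0,1]`. -/
def Attainable {A : Type*} [DecidableEq A] (σ : Sem A) (Q : QBAF A) (α : A) (s : ℝ) : Prop :=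
  ∃ w' : A × A → ℝ, (∀ r, w' r ∈ Set.Icc (0 : ℝ) 1) ∧ σ (Q.setW w') α = s

/-- The gradient-based relation attribution explanation `∇_{r→α}^σ`: the derivative
of the strength of `α` with respect to the weight of edge `r`. -/
noncomputable def grae {A : Type*} [DecidableEq A] (σ : Sem A) (Q : QBAF A)
    (r : A × A) (α : A) : ℝ :=
  deriv (fun δ => σ (Q.setW (Function.update Q.w r δ)) α) (Q.w r)

/-- Edge-directionality (local form): the strength of any argument `γ` is unaffected,
for any weight value, by an edge whose target has no path to `γ` and is not `γ`. -/
def EdgeDirectionalSem {A : Type*} [DecidableEq A] (σ : Sem A) : Prop :=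
  ∀ (Q : QBAF A) (r : A × A) (γ : A) (w' : A × A → ℝ),
    r ∈ Q.edges → ¬ HasPath Q.edges r.2 γ → r.2 ≠ γ →
    (∀ t, t ≠ r → w' t = Q.w t) → σ (Q.setW w') γ = σ Q γ

/-- **Irrelevance**: if `σ` satisfies edge-directionality and `r` is an edge
independent of the topic argument `α` (no path from the target of `r` to `α`, and
`r` is not incident into `α`), then the G-RAE of `r` w.r.t. `α` is zero. -/
theorem irrelevance {A : Type*} [DecidableEq A]
    (σ : Sem A) (hdir : EdgeDirectionalSem σ)
    (Q : QBAF A) (α : A) (r : A × A) (hr : r ∈ Q.edges)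
    (hnopath : ¬ HasPath Q.edges r.2 α) (hne : r.2 ≠ α) :
    grae σ Q r α = 0 := by
  have hconst : (fun δ => σ (Q.setW (Function.update Q.w r δ)) α) = fun _ => σ Q α := by
    funext δ
    exact hdir Q r α (Function.update Q.w r δ) hr hnopath hne
      (fun t ht => Function.update_of_ne ht _ _)
  unfold grae
  rw [hconst]
  exact deriv_const _ _
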